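/- arXiv:2312.10514 — 2 statements merged into one kernel-verified Lean document; each statement's English description precedes it below -/
import Mathlib

section
/- Let m ≥ 1 and let (J_k)_{k∈ℕ} be a bounded sequence of positive integers. There exists ε₀ = ε₀(m, sup_k J_k) ∈ (0,1) such that for every ε ∈ (0, ε₀) there exist points y_{k,j} ∈ T^m := (ℝ/2πℤ)^m, for k ∈ ℕ and 1 ≤ j ≤ J_k, with the following properties: (A) the closed balls (for the quotient metric on T^m) of radius 2ε^k centered at y_{k,j} are pairwise disjoint over all distinct pairs (k,j); (B) for every K ∈ ℕ, the Haar measure of the complement in T^m of the union of the closed balls B̄(y_{k,j}, 2ε^k) over k ≤ K, 1 ≤ j ≤ J_k, is at least (1 − Σ_{n=1}^{K} 4^{-n})·(2π)^m; in particular the measure of the complement of the union of all the balls is at least (2/3)·(2π)^m. -/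
noncomputable section

open MeasureTheory

instance : Fact (0 < 2 * Real.pi) := ⟨by positivity⟩

/-- The torus `T^m = (ℝ/2πℤ)^m`, with the product (Haar) measure of total mass `(2π)^m`. -/
abbrev Tm (m : ℕ) := Fin m → AddCircle (2 * Real.pi)

/-- The quotient metric on `T^m` induced by the Euclidean metric on `ℝ^m`:
it decouples coordinatewise, giving `dist(x,y) = √(Σ_i dist_{ℝ/2πℤ}(x_i,y_i)²)`. -/
def distT (m : ℕ) (x y : Tm m) : ℝ :=
  Real.sqrt (∑ i, dist (x i) (y i) ^ 2)

/-- The closed ball in `T^m` for the quotient (Euclidean) metric. -/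
def cball (m : ℕ) (y : Tm m) (r : ℝ) : Set (Tm m) := {x | distT m x y ≤ r}

lemma geom_aux {r : ℝ} (h0 : 0 ≤ r) (h1 : r < 1) (n : ℕ) :
    ∑ i ∈ Finset.range n, r ^ i ≤ (1 - r)⁻¹ := by
  have h2 : (0:ℝ) < 1 - r := by linarith
  have h3 : ∑ i ∈ Finset.range n, r ^ i = (1 - r ^ n) / (1 - r) := by
    rw [geom_sum_eq h1.ne]
    rw [div_eq_div_iff (by linarith) (by linarith)]
    ring
  rw [h3, ← one_div]
  gcongr
  nlinarith [pow_nonneg h0 n]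

lemma dist_coord_le {m : ℕ} (x y : Tm m) (i : Fin m) : dist (x i) (y i) ≤ distT m x y := by
  have h1 : dist (x i) (y i) ^ 2 ≤ ∑ j, dist (x j) (y j) ^ 2 :=
    Finset.single_le_sum (f := fun j => dist (x j) (y j) ^ 2)
      (fun j _ => sq_nonneg _) (Finset.mem_univ i)
  calc dist (x i) (y i) = Real.sqrt (dist (x i) (y i) ^ 2) := (Real.sqrt_sq dist_nonneg).symm
    _ ≤ distT m x y := Real.sqrt_le_sqrt h1

lemma cball_measurable {m : ℕ} (y : Tm m) (r : ℝ) : MeasurableSet (cball m y r) := by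
  have hc : Continuous fun x : Tm m => distT m x y :=
    Real.continuous_sqrt.comp
      (continuous_finset_sum _ fun i _ => ((continuous_apply i).dist continuous_const).pow 2)
  exact (isClosed_le hc continuous_const).measurableSet

lemma vol_cball {m : ℕ} (y : Tm m) {r : ℝ} (hr : 0 ≤ r) :
    volume (cball m y r) ≤ ENNReal.ofReal ((2*r) ^ m) := by
  have hsub : cball m y r ⊆ Set.pi Set.univ fun i => Metric.closedBall (y i) r := by
    intro x hx i _
    exact Metric.mem_closedBall.mpr ((dist_coord_le x y i).trans hx)
  refine (measure_mono hsub).trans ?_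
  rw [volume_pi_pi]
  calc ∏ _i : Fin m, volume (Metric.closedBall (y _i) r)
      ≤ ∏ _i : Fin m, ENNReal.ofReal (2*r) := by
        refine Finset.prod_le_prod' fun i _ => ?_
        rw [AddCircle.volume_closedBall]
        exact ENNReal.ofReal_le_ofReal (min_le_right _ _)
    _ = ENNReal.ofReal ((2*r) ^ m) := by
        rw [Finset.prod_const, Finset.card_univ, Fintype.card_fin,
          ← ENNReal.ofReal_pow (by linarith)]

lemma vol_univ (m : ℕ) :
    volume (Set.univ : Set (Tm m)) = ENNReal.ofReal ((2*Real.pi) ^ m) := by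
  rw [← Set.pi_univ Set.univ, volume_pi_pi]
  simp only [AddCircle.measure_univ]
  rw [Finset.prod_const, Finset.card_univ, Fintype.card_fin,
    ← ENNReal.ofReal_pow (by positivity)]

lemma disj_of_far {m : ℕ} (hm : 1 ≤ m) {y y' : Tm m} {r r' : ℝ}
    (h : r + r' < dist (y ⟨0, hm⟩) (y' ⟨0, hm⟩)) :
    Disjoint (cball m y r) (cball m y' r') := by
  rw [Set.disjoint_left]
  intro x hx hx'
  have h1 := dist_coord_le x y ⟨0, hm⟩
  have h2 := dist_coord_le x y' ⟨0, hm⟩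
  have h3 := dist_triangle (y ⟨0, hm⟩) (x ⟨0, hm⟩) (y' ⟨0, hm⟩)
  rw [dist_comm (y _) (x _)] at h3
  simp only [cball, Set.mem_setOf_eq] at hx hx'
  linarith

lemma dist_coe_addCircle {u v : ℝ} (h : |u - v| ≤ Real.pi) :
    dist ((u:ℝ) : AddCircle (2*Real.pi)) ((v:ℝ) : AddCircle (2*Real.pi)) = |u - v| := by
  rw [dist_eq_norm, ← AddCircle.coe_sub]
  rw [AddCircle.norm_coe_eq_abs_iff _ (by positivity : (0:ℝ) < 2 * Real.pi).ne']
  rw [abs_of_pos (by positivity : (0:ℝ) < 2 * Real.pi)]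
  linarith

/-- auxiliary radius sequence -/
def auxδ (ε : ℝ) (k : ℕ) : ℝ := 8 * ε ^ (k+1)

/-- auxiliary offsets -/
def auxa (B : ℕ) (ε : ℝ) (k : ℕ) : ℝ := ∑ i ∈ Finset.range k, (B:ℝ) * auxδ ε i

/-- auxiliary positions -/
def auxθ (B : ℕ) (ε : ℝ) (k j : ℕ) : ℝ := auxa B ε k + (j:ℝ) * auxδ ε k


/-- choice of the centers `y_{k,j} ∈ T^m`. For every `m ≥ 1` and every
bounded sequence `(J_k)` of positive integers there is `ε₀ ∈ (0,1)` such that for all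
`ε ∈ (0,ε₀)` one can pick points `y_{k,j} ∈ T^m` (`k ∈ ℕ`, `1 ≤ j ≤ J_k`; the paper's
index `k ≥ 1` is written `k+1` here) whose closed balls of radius `2ε^{k+1}` are pairwise
disjoint, with quantitative measure bounds on the complement of the balls.  -/
theorem exists_ball_centers
    (m : ℕ) (hm : 1 ≤ m) (J : ℕ → ℕ) (hJ1 : ∀ k, 1 ≤ J k) (B : ℕ) (hJB : ∀ k, J k ≤ B) :
    ∃ ε₀ : ℝ, 0 < ε₀ ∧ ε₀ < 1 ∧
      ∀ ε : ℝ, 0 < ε → ε < ε₀ →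
        ∃ y : (k : ℕ) → Fin (J k) → Tm m,
          (∀ (k k' : ℕ) (j : Fin (J k)) (j' : Fin (J k')), (k ≠ k' ∨ (j : ℕ) ≠ (j' : ℕ)) →
            Disjoint (cball m (y k j) (2 * ε ^ (k + 1))) (cball m (y k' j') (2 * ε ^ (k' + 1)))) ∧
          (∀ K : ℕ,
            ENNReal.ofReal ((1 - ∑ i ∈ Finset.range K, ((4 : ℝ)⁻¹) ^ (i + 1)) * (2 * Real.pi) ^ m)
              ≤ volume {x : Tm m | ∀ k < K, ∀ j : Fin (J k), x ∉ cball m (y k j) (2 * ε ^ (k + 1))}) ∧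
          ENNReal.ofReal ((2 / 3) * (2 * Real.pi) ^ m)
              ≤ volume {x : Tm m | ∀ (k : ℕ) (j : Fin (J k)), x ∉ cball m (y k j) (2 * ε ^ (k + 1))} := by
  have hB1 : (1:ℝ) ≤ B := by exact_mod_cast (hJ1 0).trans (hJB 0)
  refine ⟨(16*(B:ℝ)+16)⁻¹, by positivity, ?_, ?_⟩
  · have h1 : (16*(B:ℝ)+16)⁻¹ * (16*(B:ℝ)+16) = 1 := inv_mul_cancel₀ (by positivity)
    nlinarith [inv_nonneg.mpr (by positivity : (0:ℝ) ≤ 16*(B:ℝ)+16)]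
  intro ε hε0 hε₀
  have hden : (0:ℝ) < 16*(B:ℝ)+16 := by positivity
  have hmul : (16*(B:ℝ)+16)*ε < 1 := by
    have h := mul_lt_mul_of_pos_left hε₀ hden
    rwa [mul_inv_cancel₀ hden.ne'] at h
  have hBε : (B:ℝ)*ε ≤ 1/16 := by nlinarith
  have hε32 : ε < 1/32 := by nlinarith
  have hε1 : ε ≤ 1 := by linarith
  have hε4 : ε ≤ 4⁻¹ := by linarith
  have hδpos : ∀ k, 0 < auxδ ε k := fun k => by unfold auxδ; positivity
  have hasucc : ∀ k, auxa B ε (k+1) = auxa B ε k + (B:ℝ) * auxδ ε k := fun k =>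
    Finset.sum_range_succ _ k
  have hamono : Monotone (auxa B ε) := monotone_nat_of_le_succ fun k => by
    rw [hasucc]; nlinarith [hδpos k]
  have ha0 : ∀ k, 0 ≤ auxa B ε k := fun k =>
    Finset.sum_nonneg fun i _ => by nlinarith [hδpos i]
  have haub : ∀ k, auxa B ε k ≤ 16*(B:ℝ)*ε := by
    intro k
    have h1 : ∀ i ∈ Finset.range k, (B:ℝ) * auxδ ε i = (8*(B:ℝ)*ε) * ε ^ i := by
      intro i _; unfold auxδ; rw [pow_succ']; ring
    unfold auxa
    rw [Finset.sum_congr rfl h1, ← Finset.mul_sum]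
    have h2 : ∑ i ∈ Finset.range k, ε ^ i ≤ (1-ε)⁻¹ := geom_aux hε0.le (by linarith) k
    have h3 : (1-ε)⁻¹ ≤ 2 := by
      have h4 : (0:ℝ) < 1 - ε := by linarith
      rw [← one_div, div_le_iff₀ h4]; linarith
    calc (8*(B:ℝ)*ε) * ∑ i ∈ Finset.range k, ε ^ i
        ≤ (8*(B:ℝ)*ε) * 2 := mul_le_mul_of_nonneg_left (h2.trans h3) (by positivity)
      _ = 16*(B:ℝ)*ε := by ring
  have hθlb : ∀ k (j : Fin (J k)), auxa B ε k ≤ auxθ B ε k j := by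
    intro k j
    unfold auxθ
    nlinarith [hδpos k, (Nat.cast_nonneg (j:ℕ) : (0:ℝ) ≤ _)]
  have hθub : ∀ k (j : Fin (J k)), auxθ B ε k j + auxδ ε k ≤ auxa B ε (k+1) := by
    intro k j
    have hj : ((j:ℕ):ℝ) + 1 ≤ (B:ℝ) := by
      have h5 : (j:ℕ) + 1 ≤ B := (Nat.succ_le_of_lt j.2).trans (hJB k)
      exact_mod_cast h5
    unfold auxθ
    rw [hasucc]
    nlinarith [hδpos k]
  have hθ0 : ∀ k (j : Fin (J k)), 0 ≤ auxθ B ε k j := fun k j => (ha0 k).trans (hθlb k j)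
  have hθ1 : ∀ k (j : Fin (J k)), auxθ B ε k j ≤ 1 := by
    intro k j
    have h1 := hθub k j
    have h2 := haub (k+1)
    nlinarith [hδpos k]
  have hθlt : ∀ (k k' : ℕ) (j : Fin (J k)) (j' : Fin (J k')),
      (k < k' ∨ (k = k' ∧ (j:ℕ) < (j':ℕ))) →
      auxθ B ε k j + (2*ε^(k+1) + 2*ε^(k'+1)) < auxθ B ε k' j' := by
    intro k k' j j' h
    have h5 : 0 < ε^(k+1) := pow_pos hε0 _
    rcases h with h | ⟨rfl, hj⟩
    · have h1 := hθub k j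
      have h2 : auxa B ε (k+1) ≤ auxa B ε k' := hamono h
      have h3 := hθlb k' j'
      have h4 : ε^(k'+1) ≤ ε^(k+1) := pow_le_pow_of_le_one hε0.le hε1 (by omega)
      have h6 : auxδ ε k = 8 * ε^(k+1) := rfl
      linarith
    · have hj' : ((j:ℕ):ℝ) + 1 ≤ ((j':ℕ):ℝ) := by exact_mod_cast hj
      unfold auxθ auxδ
      nlinarith
  have hdistθ : ∀ (k k' : ℕ) (j : Fin (J k)) (j' : Fin (J k')),
      (k ≠ k' ∨ (j : ℕ) ≠ (j' : ℕ)) →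
      2*ε^(k+1) + 2*ε^(k'+1) <
        dist ((auxθ B ε k j : ℝ) : AddCircle (2*Real.pi))
          ((auxθ B ε k' j' : ℝ) : AddCircle (2*Real.pi)) := by
    intro k k' j j' h
    have hb0 := hθ0 k j; have hb1 := hθ1 k j
    have hb0' := hθ0 k' j'; have hb1' := hθ1 k' j'
    have hπ := Real.pi_gt_three
    have hp1 : 0 < ε^(k+1) := pow_pos hε0 _
    have hp2 : 0 < ε^(k'+1) := pow_pos hε0 _
    have habs : |auxθ B ε k j - auxθ B ε k' j'| ≤ Real.pi := by
      rw [abs_le]; constructor <;> linarith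
    rw [dist_coe_addCircle habs]
    have key : auxθ B ε k j + (2*ε^(k+1) + 2*ε^(k'+1)) < auxθ B ε k' j' ∨
               auxθ B ε k' j' + (2*ε^(k+1) + 2*ε^(k'+1)) < auxθ B ε k j := by
      rcases Nat.lt_trichotomy k k' with hkk | rfl | hkk
      · exact Or.inl (hθlt k k' j j' (Or.inl hkk))
      · rcases h with h | h
        · exact absurd rfl h
        rcases Nat.lt_or_ge (j:ℕ) (j':ℕ) with hjj | hjj
        · exact Or.inl (hθlt k k j j' (Or.inr ⟨rfl, hjj⟩))
        · have hlt : (j':ℕ) < (j:ℕ) := lt_of_le_of_ne hjj (Ne.symm h)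
          have h7 := hθlt k k j' j (Or.inr ⟨rfl, hlt⟩)
          exact Or.inr (by linarith)
      · have h7 := hθlt k' k j' j (Or.inl hkk)
        exact Or.inr (by linarith)
    rcases key with hlt | hlt
    · rw [abs_sub_comm, abs_of_pos (by linarith)]; linarith
    · rw [abs_of_pos (by linarith)]; linarith
  -- measure bounds
  have hT1 : (1:ℝ) ≤ (2*Real.pi)^m := one_le_pow₀ (by nlinarith [Real.pi_gt_three])
  have hkey : ∀ k : ℕ, (J k : ℝ) * (2*(2*ε^(k+1)))^m ≤ ((4:ℝ)⁻¹)^(k+1) * (2*Real.pi)^m := by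
    intro k
    have hεk : ε^(k+1) ≤ ε := pow_le_of_le_one hε0.le hε1 (Nat.succ_ne_zero k)
    have hx0 : (0:ℝ) ≤ 2*(2*ε^(k+1)) := by positivity
    have hx1 : 2*(2*ε^(k+1)) ≤ 1 := by nlinarith
    have hxm : (2*(2*ε^(k+1)))^m ≤ 2*(2*ε^(k+1)) := pow_le_of_le_one hx0 hx1 (by omega)
    have hJk : (J k : ℝ) ≤ (B:ℝ) := by exact_mod_cast hJB k
    have hεk4 : ε^k ≤ ((4:ℝ)⁻¹)^k := pow_le_pow_left₀ hε0.le hε4 k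
    calc (J k : ℝ) * (2*(2*ε^(k+1)))^m
        ≤ (B:ℝ) * (2*(2*ε^(k+1))) := mul_le_mul hJk hxm (by positivity) (by linarith)
      _ = (4*((B:ℝ)*ε)) * ε^k := by rw [pow_succ]; ring
      _ ≤ (4*(1/16)) * ((4:ℝ)⁻¹)^k :=
          mul_le_mul (by linarith) hεk4 (by positivity) (by norm_num)
      _ = ((4:ℝ)⁻¹)^(k+1) * 1 := by rw [pow_succ]; ring
      _ ≤ ((4:ℝ)⁻¹)^(k+1) * (2*Real.pi)^m :=
          mul_le_mul_of_nonneg_left hT1 (by positivity)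
  set yy : (k : ℕ) → Fin (J k) → Tm m :=
    fun k j _ => ((auxθ B ε k (j:ℕ) : ℝ) : AddCircle (2*Real.pi)) with hyy
  set U : ℕ → Set (Tm m) :=
    fun K => ⋃ k, ⋃ (_ : k < K), ⋃ j : Fin (J k), cball m (yy k j) (2*ε^(k+1)) with hUdef
  have hUmeas : ∀ K, MeasurableSet (U K) := fun K =>
    MeasurableSet.iUnion fun k => MeasurableSet.iUnion fun _ => MeasurableSet.iUnion fun j =>
      cball_measurable _ _
  have hS0 : ∀ K : ℕ, 0 ≤ ∑ i ∈ Finset.range K, ((4:ℝ)⁻¹)^(i+1) := fun K =>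
    Finset.sum_nonneg fun i _ => by positivity
  have hUvol : ∀ K, volume (U K) ≤
      ENNReal.ofReal ((∑ i ∈ Finset.range K, ((4:ℝ)⁻¹)^(i+1)) * (2*Real.pi)^m) := by
    intro K
    induction K with
    | zero =>
      have h0 : U 0 = ∅ := by simp [hUdef]
      rw [h0]; simp
    | succ K ih =>
      have hsplit : U (K+1) = U K ∪ ⋃ j : Fin (J K), cball m (yy K j) (2*ε^(K+1)) := by
        simp only [hUdef]
        ext x
        simp only [Set.mem_iUnion, Set.mem_union, Nat.lt_succ_iff_lt_or_eq, exists_prop]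
        constructor
        · rintro ⟨k, hk | rfl, hx⟩
          · exact Or.inl ⟨k, hk, hx⟩
          · exact Or.inr hx
        · rintro (⟨k, hk, hx⟩ | hx)
          · exact ⟨k, Or.inl hk, hx⟩
          · exact ⟨K, Or.inr rfl, hx⟩
      have hlevel : volume (⋃ j : Fin (J K), cball m (yy K j) (2*ε^(K+1)))
          ≤ ENNReal.ofReal (((4:ℝ)⁻¹)^(K+1) * (2*Real.pi)^m) := by
        calc volume (⋃ j : Fin (J K), cball m (yy K j) (2*ε^(K+1)))
            ≤ ∑ j : Fin (J K), volume (cball m (yy K j) (2*ε^(K+1))) :=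
              measure_iUnion_fintype_le _ _
          _ ≤ ∑ _j : Fin (J K), ENNReal.ofReal ((2*(2*ε^(K+1)))^m) :=
              Finset.sum_le_sum fun j _ => vol_cball _ (by positivity)
          _ = (J K : ENNReal) * ENNReal.ofReal ((2*(2*ε^(K+1)))^m) := by
              rw [Finset.sum_const, Finset.card_univ, Fintype.card_fin, nsmul_eq_mul]
          _ = ENNReal.ofReal ((J K : ℝ) * (2*(2*ε^(K+1)))^m) := by
              rw [ENNReal.ofReal_mul (Nat.cast_nonneg _), ENNReal.ofReal_natCast]
          _ ≤ _ := ENNReal.ofReal_le_ofReal (hkey K)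
      calc volume (U (K+1))
          ≤ volume (U K) + volume (⋃ j : Fin (J K), cball m (yy K j) (2*ε^(K+1))) := by
            rw [hsplit]; exact measure_union_le _ _
        _ ≤ ENNReal.ofReal ((∑ i ∈ Finset.range K, ((4:ℝ)⁻¹)^(i+1)) * (2*Real.pi)^m)
            + ENNReal.ofReal (((4:ℝ)⁻¹)^(K+1) * (2*Real.pi)^m) := add_le_add ih hlevel
        _ = ENNReal.ofReal ((∑ i ∈ Finset.range (K+1), ((4:ℝ)⁻¹)^(i+1)) * (2*Real.pi)^m) := by
            rw [← ENNReal.ofReal_add (mul_nonneg (hS0 K) (by positivity)) (by positivity)]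
            congr 1
            rw [Finset.sum_range_succ]
            ring
  have hUne : ∀ K, volume (U K) ≠ ⊤ := fun K =>
    ((measure_mono (Set.subset_univ _)).trans_lt
      (by rw [vol_univ]; exact ENNReal.ofReal_lt_top)).ne
  have hcompl : ∀ K, ENNReal.ofReal
      ((1 - ∑ i ∈ Finset.range K, ((4:ℝ)⁻¹)^(i+1)) * (2*Real.pi)^m) ≤ volume ((U K)ᶜ) := by
    intro K
    rw [measure_compl (hUmeas K) (hUne K), vol_univ]
    calc ENNReal.ofReal ((1 - ∑ i ∈ Finset.range K, ((4:ℝ)⁻¹)^(i+1)) * (2*Real.pi)^m)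
        = ENNReal.ofReal
            ((2*Real.pi)^m - (∑ i ∈ Finset.range K, ((4:ℝ)⁻¹)^(i+1)) * (2*Real.pi)^m) := by
          congr 1; ring
      _ = ENNReal.ofReal ((2*Real.pi)^m)
          - ENNReal.ofReal ((∑ i ∈ Finset.range K, ((4:ℝ)⁻¹)^(i+1)) * (2*Real.pi)^m) :=
          ENNReal.ofReal_sub _ (mul_nonneg (hS0 K) (by positivity))
      _ ≤ ENNReal.ofReal ((2*Real.pi)^m) - volume (U K) := tsub_le_tsub_left (hUvol K) _
  have hVeq : ∀ K, {x : Tm m | ∀ k < K, ∀ j : Fin (J k), x ∉ cball m (yy k j) (2 * ε ^ (k + 1))}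
      = (U K)ᶜ := by
    intro K
    simp only [hUdef]
    ext x
    simp only [Set.mem_setOf_eq, Set.mem_compl_iff, Set.mem_iUnion, exists_prop, not_exists,
      not_and]
  refine ⟨yy, ?_, ?_, ?_⟩
  · intro k k' j j' h
    exact disj_of_far hm (hdistθ k k' j j' h)
  · intro K
    rw [hVeq K]
    exact hcompl K
  · have hWeq : {x : Tm m | ∀ (k : ℕ) (j : Fin (J k)), x ∉ cball m (yy k j) (2 * ε ^ (k + 1))}
        = ⋂ K, (U K)ᶜ := by
      ext x
      simp only [hUdef, Set.mem_setOf_eq, Set.mem_iInter, Set.mem_compl_iff, Set.mem_iUnion,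
        exists_prop, not_exists, not_and]
      constructor
      · intro h K k hk j
        exact h k j
      · intro h k j
        exact h (k+1) k (Nat.lt_succ_self k) j
    rw [hWeq]
    have hUmono : Monotone U := by
      intro K K' hKK' x hx
      simp only [hUdef, Set.mem_iUnion, exists_prop] at hx ⊢
      obtain ⟨k, hk, hxk⟩ := hx
      exact ⟨k, hk.trans_le hKK', hxk⟩
    have hdir : Directed (· ⊇ ·) fun K => (U K)ᶜ := fun K K' =>
      ⟨max K K', Set.compl_subset_compl.mpr (hUmono (le_max_left _ _)),
        Set.compl_subset_compl.mpr (hUmono (le_max_right _ _))⟩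
    rw [Directed.measure_iInter (fun K => (hUmeas K).compl.nullMeasurableSet) hdir
      ⟨0, ((measure_mono (Set.subset_univ _)).trans_lt
        (by rw [vol_univ]; exact ENNReal.ofReal_lt_top)).ne⟩]
    refine le_iInf fun K => le_trans (ENNReal.ofReal_le_ofReal ?_) (hcompl K)
    have h13 : ∑ i ∈ Finset.range K, ((4:ℝ)⁻¹)^(i+1) ≤ 1/3 := by
      have h1 : ∑ i ∈ Finset.range K, ((4:ℝ)⁻¹)^(i+1)
          = 4⁻¹ * ∑ i ∈ Finset.range K, ((4:ℝ)⁻¹)^i := by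
        rw [Finset.mul_sum]
        exact Finset.sum_congr rfl fun i _ => by rw [pow_succ']
      rw [h1]
      have h2 := geom_aux (by norm_num : (0:ℝ) ≤ 4⁻¹) (by norm_num) K
      calc (4:ℝ)⁻¹ * ∑ i ∈ Finset.range K, ((4:ℝ)⁻¹)^i
          ≤ 4⁻¹ * (1 - 4⁻¹)⁻¹ := mul_le_mul_of_nonneg_left h2 (by norm_num)
        _ = 1/3 := by norm_num
    have hTpos : (0:ℝ) ≤ (2*Real.pi)^m := by positivity
    nlinarith
end
end

section
/- Let d, m ≥ 1 and n ∈ ℕ. Let (f_k)_{k∈ℕ} be a sequence of C^n functions ℝ^d → ℝ^m whose supports are pairwise disjoint and form a locally finite family of closed sets, and assume sup_k ‖f_k‖_{j,∞} < ∞ for every 0 ≤ j ≤ n. Then the pointwise sum f := Σ_{k∈ℕ} f_k is well defined, of class C^n on ℝ^d, and ‖f‖_{j,∞} = sup_k ‖f_k‖_{j,∞} for every 0 ≤ j ≤ n. -/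
noncomputable section

/-- The convective derivative `(f·∇)g`, whose `i`-th component is `Σ_j f_j ∂_{x_j} g_i`. -/
def conv {ι : Type*} [Fintype ι] [DecidableEq ι]
    (f g : EuclideanSpace ℝ ι → EuclideanSpace ℝ ι) (x : EuclideanSpace ℝ ι) :
    EuclideanSpace ℝ ι :=
  ∑ j, f x j • fderiv ℝ g x (EuclideanSpace.single j 1)

/-- The divergence `div f = Σ_j ∂_{x_j} f_j`. -/
def diverg {ι : Type*} [Fintype ι] [DecidableEq ι]
    (f : EuclideanSpace ℝ ι → EuclideanSpace ℝ ι) (x : EuclideanSpace ℝ ι) : ℝ :=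
  ∑ j, fderiv ℝ f x (EuclideanSpace.single j 1) j

/-- The gradient `∇p` of a scalar function. -/
def grad {ι : Type*} [Fintype ι] [DecidableEq ι] (p : EuclideanSpace ℝ ι → ℝ)
    (x : EuclideanSpace ℝ ι) : EuclideanSpace ℝ ι :=
  (EuclideanSpace.equiv ι ℝ).symm (fun i => fderiv ℝ p x (EuclideanSpace.single i 1))

/-- The seminorm `‖f‖_{N,∞} = sup_x ‖D^N f(x)‖`. -/
def snorm {X Y : Type*} [NormedAddCommGroup X] [NormedSpace ℝ X] [NormedAddCommGroup Y]
    [NormedSpace ℝ Y] (N : ℕ) (f : X → Y) : ℝ := ⨆ x, ‖iteratedFDeriv ℝ N f x‖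

theorem EvtEq.iteratedFDeriv_eq_aux {X Y : Type*} [NormedAddCommGroup X] [NormedSpace ℝ X]
    [NormedAddCommGroup Y] [NormedSpace ℝ Y] {f g : X → Y} {x : X}
    (h : f =ᶠ[nhds x] g) (N : ℕ) : iteratedFDeriv ℝ N f x = iteratedFDeriv ℝ N g x := by
  rw [← iteratedFDerivWithin_univ, ← iteratedFDerivWithin_univ]
  exact Filter.EventuallyEq.iteratedFDerivWithin_eq (by simpa [nhdsWithin_univ] using h)
    h.self_of_nhds N

/-- a sum `Σ_k f_k` of `C^n` functions whose supports are pairwise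
disjoint and locally finite, with uniformly bounded seminorms, is a well-defined `C^n`
function with `‖Σ_k f_k‖_{j,∞} = sup_k ‖f_k‖_{j,∞}` for all `j ≤ n`. -/
theorem sum_of_disjointly_supported
    (d m n : ℕ) (hd : 1 ≤ d) (hm : 1 ≤ m)
    (f : ℕ → EuclideanSpace ℝ (Fin d) → EuclideanSpace ℝ (Fin m))
    (hreg : ∀ k, ContDiff ℝ (n : ℕ∞) (f k))
    (hdisj : ∀ k k', k ≠ k' → Disjoint (tsupport (f k)) (tsupport (f k')))
    (hlf : LocallyFinite (fun k => tsupport (f k)))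
    (hb1 : ∀ k, ∀ j ≤ n, BddAbove (Set.range fun x => ‖iteratedFDeriv ℝ j (f k) x‖))
    (hb2 : ∀ j ≤ n, BddAbove (Set.range fun k => snorm j (f k))) :
    (∀ x, Summable (fun k => f k x)) ∧
    ContDiff ℝ (n : ℕ∞) (fun x => ∑' k, f k x) ∧
    (∀ j ≤ n, snorm j (fun x => ∑' k, f k x) = ⨆ k, snorm j (f k)) := by
  set F : EuclideanSpace ℝ (Fin d) → EuclideanSpace ℝ (Fin m) := fun x => ∑' k, f k x with hF
  -- support of (fun k => f k x) is subsingleton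
  have hsub : ∀ x, (Function.support fun k => f k x).Subsingleton := by
    intro x k hk k' hk'
    by_contra hkk'
    exact Set.disjoint_left.1 (hdisj k k' hkk')
      (subset_tsupport _ hk) (subset_tsupport _ hk')
  have hsummable : ∀ x, Summable fun k => f k x := fun x =>
    summable_of_finite_support ((hsub x).finite)
  -- near a point of tsupport (f k₀), F agrees with f k₀
  have hloc1 : ∀ k₀ x, x ∈ tsupport (f k₀) → F =ᶠ[nhds x] f k₀ := by
    intro k₀ x hx
    set W : Set (EuclideanSpace ℝ (Fin d)) := ⋃ k : {k // k ≠ k₀}, tsupport (f k) with hW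
    have hWc : IsClosed W :=
      (hlf.comp_injective Subtype.val_injective).isClosed_iUnion fun k => isClosed_tsupport _
    have hxW : x ∉ W := by
      intro hxW
      obtain ⟨k, hk⟩ := Set.mem_iUnion.1 hxW
      exact Set.disjoint_left.1 (hdisj k k₀ k.2) hk hx
    filter_upwards [hWc.isOpen_compl.mem_nhds hxW] with y hy
    refine tsum_eq_single k₀ fun k' hk' => ?_
    have : y ∉ tsupport (f k') := fun h => hy (Set.mem_iUnion.2 ⟨⟨k', hk'⟩, h⟩)
    exact image_eq_zero_of_notMem_tsupport this
  -- near a point outside all supports, F vanishes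
  have hloc0 : ∀ x, x ∉ (⋃ k, tsupport (f k)) → F =ᶠ[nhds x] (fun _ => 0) := by
    intro x hx
    have hWc : IsClosed (⋃ k, tsupport (f k)) :=
      hlf.isClosed_iUnion fun k => isClosed_tsupport _
    filter_upwards [hWc.isOpen_compl.mem_nhds hx] with y hy
    have : ∀ k, f k y = 0 := fun k =>
      image_eq_zero_of_notMem_tsupport fun h => hy (Set.mem_iUnion.2 ⟨k, h⟩)
    simp [hF, this]
  have hcd : ContDiff ℝ (n : ℕ∞) F := by
    rw [contDiff_iff_contDiffAt]
    intro x
    by_cases hx : x ∈ ⋃ k, tsupport (f k)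
    · obtain ⟨k, hk⟩ := Set.mem_iUnion.1 hx
      exact ((hreg k).contDiffAt).congr_of_eventuallyEq (hloc1 k x hk)
    · exact contDiffAt_const.congr_of_eventuallyEq (hloc0 x hx)
  refine ⟨hsummable, hcd, fun j hj => ?_⟩
  have hnonneg : (0 : ℝ) ≤ ⨆ k, snorm j (f k) :=
    Real.iSup_nonneg fun k => Real.iSup_nonneg fun x => norm_nonneg _
  -- pointwise bound for F
  have hFle : ∀ x, ‖iteratedFDeriv ℝ j F x‖ ≤ ⨆ k, snorm j (f k) := by
    intro x
    by_cases hx : x ∈ ⋃ k, tsupport (f k)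
    · obtain ⟨k, hk⟩ := Set.mem_iUnion.1 hx
      rw [EvtEq.iteratedFDeriv_eq_aux (hloc1 k x hk) j]
      calc ‖iteratedFDeriv ℝ j (f k) x‖ ≤ snorm j (f k) :=
            le_ciSup (hb1 k j hj) x
        _ ≤ ⨆ k, snorm j (f k) := le_ciSup (hb2 j hj) k
    · rw [EvtEq.iteratedFDeriv_eq_aux (hloc0 x hx) j]
      simpa [iteratedFDeriv_zero_fun] using hnonneg
  have hFbdd : BddAbove (Set.range fun x => ‖iteratedFDeriv ℝ j F x‖) :=
    ⟨_, Set.forall_mem_range.2 hFle⟩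
  refine le_antisymm (ciSup_le hFle) (ciSup_le fun k => ciSup_le fun x => ?_)
  by_cases hx : x ∈ tsupport (f k)
  · rw [← EvtEq.iteratedFDeriv_eq_aux (hloc1 k x hx) j]
    exact le_ciSup hFbdd x
  · have h0 : f k =ᶠ[nhds x] (fun _ => 0) := by
      filter_upwards [(isClosed_tsupport (f k)).isOpen_compl.mem_nhds hx] with y hy
      exact image_eq_zero_of_notMem_tsupport hy
    rw [EvtEq.iteratedFDeriv_eq_aux h0 j]
    simp only [iteratedFDeriv_zero_fun, Pi.zero_apply, norm_zero]
    exact Real.iSup_nonneg fun x => norm_nonneg _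
end
end
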